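/- The function J⁽¹⁾ : [0,∞) × [0,1] → [0,∞] defined by J⁽¹⁾(κ,ρ) := min(ρ,1−ρ)·Ψ(κ/min(ρ,1−ρ)) for ρ ∈ (0,1), with appropriate boundary values (∞ for κ>0 at ρ∈{0,1}, and 0 if κ=0), is convex. -/

import Mathlib

open scoped ENNReal

/-- The truncated Poisson rate function `Ψ(λ) = λ log(max λ 1) − (max λ 1 − 1)`. -/
noncomputable def trPoisson (l : ℝ) : ℝ := l * Real.log (max l 1) - (max l 1 - 1)

/-- The rate density `J⁽¹⁾(κ,ρ) = min(ρ,1−ρ)·Ψ(κ/min(ρ,1−ρ))`, with boundary conventions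
`J⁽¹⁾(κ,0) = J⁽¹⁾(κ,1) = ∞` for `κ > 0` and `J⁽¹⁾(0,0) = J⁽¹⁾(0,1) = 0`. -/
noncomputable def rateJ1 (κ ρ : ℝ) : ℝ≥0∞ :=
  if ρ = 0 ∨ ρ = 1 then (if κ = 0 then 0 else ⊤)
  else ENNReal.ofReal (min ρ (1 - ρ) * trPoisson (κ / min ρ (1 - ρ)))

lemma trP_lb (l α : ℝ) (hl : 0 ≤ l) (hα : 0 ≤ α) :
    l * α - (Real.exp α - 1) ≤ trPoisson l := by
  unfold trPoisson
  rcases le_total l 1 with h | h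
  · rw [max_eq_right h]
    have h1 : α + 1 ≤ Real.exp α := Real.add_one_le_exp α
    have h2 : 0 ≤ (1 - l) * α := mul_nonneg (by linarith) hα
    simp only [Real.log_one]
    nlinarith
  · rw [max_eq_left h]
    have h0 : (0:ℝ) < l := lt_of_lt_of_le one_pos h
    have h1 : (α - Real.log l) + 1 ≤ Real.exp (α - Real.log l) := Real.add_one_le_exp _
    have h2 : Real.exp (α - Real.log l) = Real.exp α / l := by
      rw [Real.exp_sub, Real.exp_log h0]
    rw [h2] at h1
    have h3 := mul_le_mul_of_nonneg_left h1 h0.le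
    have h4 : l * (Real.exp α / l) = Real.exp α := by field_simp
    nlinarith

lemma trP_nonneg (l : ℝ) (hl : 0 ≤ l) : 0 ≤ trPoisson l := by
  have := trP_lb l 0 hl le_rfl
  simpa using this

lemma rateJ1_core (a b p q m Ta Tb : ℝ) (hm : p + q ≤ m) (hm0 : 0 < m)
    (hTa : ∀ α, 0 ≤ α → a * α - p * (Real.exp α - 1) ≤ Ta)
    (hTb : ∀ α, 0 ≤ α → b * α - q * (Real.exp α - 1) ≤ Tb) :
    m * trPoisson ((a + b) / m) ≤ Ta + Tb := by
  set l := (a + b) / m with hl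
  set α := Real.log (max l 1) with hα
  have hα0 : 0 ≤ α := Real.log_nonneg (le_max_right _ _)
  have hexp : Real.exp α = max l 1 := Real.exp_log (lt_of_lt_of_le one_pos (le_max_right _ _))
  have hml : m * l = a + b := by rw [hl]; field_simp [hm0.ne']
  have key : m * trPoisson l = (a + b) * α - m * (Real.exp α - 1) := by
    unfold trPoisson
    rw [hexp, ← hml]; ring
  have h1 := hTa α hα0
  have h2 := hTb α hα0
  have he1 : (1:ℝ) ≤ Real.exp α := Real.one_le_exp hα0
  nlinarith [mul_nonneg (sub_nonneg.mpr hm) (sub_nonneg.mpr he1)]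

/-- The function `J⁽¹⁾ : [0,∞) × [0,1] → [0,∞]` is jointly convex. -/
theorem stmt3 (κ₁ κ₂ ρ₁ ρ₂ t : ℝ) (hκ₁ : 0 ≤ κ₁) (hκ₂ : 0 ≤ κ₂)
    (hρ₁ : ρ₁ ∈ Set.Icc (0:ℝ) 1) (hρ₂ : ρ₂ ∈ Set.Icc (0:ℝ) 1)
    (ht : t ∈ Set.Icc (0:ℝ) 1) :
    rateJ1 (t * κ₁ + (1 - t) * κ₂) (t * ρ₁ + (1 - t) * ρ₂) ≤
      ENNReal.ofReal t * rateJ1 κ₁ ρ₁ + ENNReal.ofReal (1 - t) * rateJ1 κ₂ ρ₂ := by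
  obtain ⟨ht0, ht1⟩ := ht
  obtain ⟨h10, h11⟩ := hρ₁
  obtain ⟨h20, h21⟩ := hρ₂
  rcases eq_or_lt_of_le ht0 with h | htpos
  · rw [← h]; simp
  rcases eq_or_lt_of_le ht1 with h | htlt
  · rw [h]; simp
  have h1t : (0:ℝ) < 1 - t := by linarith
  by_cases hB1 : (ρ₁ = 0 ∨ ρ₁ = 1) ∧ κ₁ ≠ 0
  · have hT : rateJ1 κ₁ ρ₁ = ⊤ := by simp [rateJ1, hB1.1, hB1.2]
    rw [hT, ENNReal.mul_top (ENNReal.ofReal_pos.mpr htpos).ne', top_add]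
    exact le_top
  by_cases hB2 : (ρ₂ = 0 ∨ ρ₂ = 1) ∧ κ₂ ≠ 0
  · have hT : rateJ1 κ₂ ρ₂ = ⊤ := by simp [rateJ1, hB2.1, hB2.2]
    rw [hT, ENNReal.mul_top (ENNReal.ofReal_pos.mpr h1t).ne', add_top]
    exact le_top
  push_neg at hB1 hB2
  set ρ := t * ρ₁ + (1 - t) * ρ₂ with hρdef
  set κ := t * κ₁ + (1 - t) * κ₂ with hκdef
  by_cases hBc : ρ = 0 ∨ ρ = 1
  · have hκ0 : κ = 0 := by
      rcases hBc with h | h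
      · have hr1 : ρ₁ = 0 := by nlinarith
        have hr2 : ρ₂ = 0 := by nlinarith
        have k1 : κ₁ = 0 := hB1 (Or.inl hr1)
        have k2 : κ₂ = 0 := hB2 (Or.inl hr2)
        simp [hκdef, k1, k2]
      · have hr1 : ρ₁ = 1 := by nlinarith
        have hr2 : ρ₂ = 1 := by nlinarith
        have k1 : κ₁ = 0 := hB1 (Or.inr hr1)
        have k2 : κ₂ = 0 := hB2 (Or.inr hr2)
        simp [hκdef, k1, k2]
    have : rateJ1 κ ρ = 0 := by simp [rateJ1, hBc, hκ0]
    rw [this]; exact zero_le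
  push_neg at hBc
  obtain ⟨hρ0, hρ1⟩ := hBc
  have hρin0 : 0 ≤ ρ := by nlinarith
  have hρin1 : ρ ≤ 1 := by nlinarith
  have hm0 : 0 < min ρ (1 - ρ) :=
    lt_min (lt_of_le_of_ne hρin0 (Ne.symm hρ0))
      (by cases lt_or_eq_of_le hρin1 with
        | inl h => linarith
        | inr h => exact absurd h hρ1)
  set m₁ := min ρ₁ (1 - ρ₁) with hm₁
  set m₂ := min ρ₂ (1 - ρ₂) with hm₂
  -- concavity of min ρ (1-ρ)
  have hconc : t * m₁ + (1 - t) * m₂ ≤ min ρ (1 - ρ) := by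
    apply le_min
    · have := min_le_left ρ₁ (1 - ρ₁)
      have := min_le_left ρ₂ (1 - ρ₂)
      nlinarith
    · have := min_le_right ρ₁ (1 - ρ₁)
      have := min_le_right ρ₂ (1 - ρ₂)
      nlinarith
  -- define the real contributions
  have key : ∀ (κ' ρ' : ℝ) (s : ℝ), 0 < s → 0 ≤ κ' → 0 ≤ ρ' → ρ' ≤ 1 →
      ((ρ' = 0 ∨ ρ' = 1) → κ' = 0) →
      ∃ T : ℝ, 0 ≤ T ∧ ENNReal.ofReal s * rateJ1 κ' ρ' = ENNReal.ofReal T ∧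
        ∀ α, 0 ≤ α → (s * κ') * α - (s * min ρ' (1 - ρ')) * (Real.exp α - 1) ≤ T := by
    intro κ' ρ' s hs hκ' h0' h1' hBnd
    by_cases hb : ρ' = 0 ∨ ρ' = 1
    · refine ⟨0, le_rfl, ?_, ?_⟩
      · simp [rateJ1, hb, hBnd hb]
      · intro α hα
        have hκ'0 := hBnd hb
        have hmin : min ρ' (1 - ρ') = 0 := by
          rcases hb with h | h <;> simp [h]
        rw [hκ'0, hmin]
        simp
    · push_neg at hb
      have hm' : 0 < min ρ' (1 - ρ') :=
        lt_min (lt_of_le_of_ne h0' (Ne.symm hb.1))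
          (by cases lt_or_eq_of_le h1' with
            | inl h => linarith
            | inr h => exact absurd h hb.2)
      refine ⟨s * (min ρ' (1 - ρ') * trPoisson (κ' / min ρ' (1 - ρ'))), ?_, ?_, ?_⟩
      · exact mul_nonneg hs.le (mul_nonneg hm'.le
          (trP_nonneg _ (div_nonneg hκ' hm'.le)))
      · rw [rateJ1, if_neg (by push_neg; exact hb), ← ENNReal.ofReal_mul hs.le]
      · intro α hα
        have hlb := trP_lb (κ' / min ρ' (1 - ρ')) α (div_nonneg hκ' hm'.le) hα
        have h2 := mul_le_mul_of_nonneg_left hlb (mul_nonneg hs.le hm'.le)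
        have h5 : s * κ' * α - s * min ρ' (1 - ρ') * (Real.exp α - 1)
            = s * min ρ' (1 - ρ') * (κ' / min ρ' (1 - ρ') * α - (Real.exp α - 1)) := by
          field_simp
        rw [h5]
        calc s * min ρ' (1 - ρ') * (κ' / min ρ' (1 - ρ') * α - (Real.exp α - 1))
            ≤ s * min ρ' (1 - ρ') * trPoisson (κ' / min ρ' (1 - ρ')) := h2
          _ = s * (min ρ' (1 - ρ') * trPoisson (κ' / min ρ' (1 - ρ'))) := by ring
  obtain ⟨Ta, hTa0, hTaeq, hTalb⟩ := key κ₁ ρ₁ t htpos hκ₁ h10 h11 hB1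
  obtain ⟨Tb, hTb0, hTbeq, hTblb⟩ := key κ₂ ρ₂ (1 - t) h1t hκ₂ h20 h21 hB2
  have hcore := rateJ1_core (t * κ₁) ((1 - t) * κ₂) (t * m₁) ((1 - t) * m₂)
      (min ρ (1 - ρ)) Ta Tb hconc hm0 hTalb hTblb
  have hLHS : rateJ1 κ ρ =
      ENNReal.ofReal (min ρ (1 - ρ) * trPoisson (κ / min ρ (1 - ρ))) := by
    rw [rateJ1, if_neg (by push_neg; exact ⟨hρ0, hρ1⟩)]
  rw [hLHS, hTaeq, hTbeq, ← ENNReal.ofReal_add hTa0 hTb0]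
  exact ENNReal.ofReal_le_ofReal (by rw [hκdef]; exact hcore)
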